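/- For every integer k ≥ 2, the limit as n → ∞ of (1/n)·|{M : 1 ≤ M ≤ n, ‖M‖_∞ = k}| exists and equals 1/ζ(k+1) − 1/ζ(k), where ζ is the Riemann zeta function. -/

import Mathlib

open scoped Classical
open Filter

/-- The largest exponent appearing in the prime factorization of `N`
(`0` for `N = 0, 1`). -/
noncomputable def normInf (N : ℕ) : ℕ :=
  N.factorization.support.sup fun p => N.factorization p

open ArithmeticFunction ArithmeticFunction.Moebius Finset in
lemma normInf_aux_exists_r {j M : ℕ} (hj : 1 ≤ j) (hM : M ≠ 0) :
    ∃ r : ℕ, r ≠ 0 ∧ r ∣ M ∧ (∀ d : ℕ, d ≠ 0 → (d ^ j ∣ M ↔ d ∣ r)) ∧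
      (r = 1 ↔ normInf M < j) := by
  set f := M.factorization with hf
  set g : ℕ →₀ ℕ := f.mapRange (· / j) (Nat.zero_div j) with hg
  have hgsupp : ∀ p ∈ g.support, Nat.Prime p := fun p hp => by
    have hsub : g.support ⊆ f.support := Finsupp.support_mapRange
    exact Nat.prime_of_mem_primeFactors
      (by simpa [hf, Nat.support_factorization] using hsub hp)
  have hr0 : g.prod (· ^ ·) ≠ 0 :=
    (Finset.prod_pos fun p hp => pow_pos (hgsupp p hp).pos _).ne'
  have hrf : (g.prod (· ^ ·)).factorization = g :=
    Nat.prod_pow_factorization_eq_self hgsupp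
  have hgapp : ∀ p, g p = f p / j := fun p => rfl
  refine ⟨g.prod (· ^ ·), hr0, ?_, ?_, ?_⟩
  · rw [← Nat.factorization_le_iff_dvd hr0 hM, hrf]
    exact Finsupp.le_def.mpr fun p => by rw [hgapp]; exact Nat.div_le_self _ _
  · intro d hd
    rw [← Nat.factorization_le_iff_dvd (pow_ne_zero j hd) hM,
      ← Nat.factorization_le_iff_dvd hd hr0, hrf, Nat.factorization_pow,
      Finsupp.le_def, Finsupp.le_def]
    refine forall_congr' fun p => ?_
    rw [Finsupp.smul_apply, hgapp, smul_eq_mul,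
      Nat.le_div_iff_mul_le (by omega : 0 < j), mul_comm]
  · constructor
    · intro h1
      have hg0 : g = 0 := by rw [← hrf, h1, Nat.factorization_one]
      rw [normInf]
      refine Finset.sup_lt_iff (by rw [Nat.bot_eq_zero]; omega) |>.mpr fun p hp => ?_
      have h2 : f p / j = 0 := by rw [← hgapp, hg0]; rfl
      have := (Nat.div_eq_zero_iff.mp h2).resolve_left (by omega)
      rwa [hf] at this
    · intro hlt
      have hg0 : g = 0 := by
        ext p
        rw [hgapp]
        by_cases hp : p ∈ f.support
        · exact Nat.div_eq_of_lt (Finset.sup_lt_iff (by rw [Nat.bot_eq_zero]; omega) |>.mp hlt p hp)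
        · simp [Finsupp.notMem_support_iff.mp hp]
      rw [hg0]
      simp

open ArithmeticFunction ArithmeticFunction.Moebius Finset in
lemma normInf_ite_eq_sum {j : ℕ} (hj : 1 ≤ j) {n M : ℕ} (hM1 : 1 ≤ M) (hMn : M ≤ n) :
    (if normInf M < j then (1:ℤ) else 0)
      = ∑ d ∈ Finset.Icc 1 n, if d ^ j ∣ M then (μ d : ℤ) else 0 := by
  obtain ⟨r, hr0, hrM, hiff, hone⟩ := normInf_aux_exists_r hj (by omega : M ≠ 0)
  have hset : (Finset.Icc 1 n).filter (fun d => d ^ j ∣ M) = r.divisors := by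
    ext d
    simp only [Finset.mem_filter, Finset.mem_Icc, Nat.mem_divisors]
    constructor
    · rintro ⟨⟨h1, h2⟩, h3⟩
      exact ⟨(hiff d (by omega)).mp h3, hr0⟩
    · rintro ⟨hdr, -⟩
      have hd0 : d ≠ 0 := by rintro rfl; exact hr0 (Nat.eq_zero_of_zero_dvd hdr)
      have h3 : d ^ j ∣ M := (hiff d hd0).mpr hdr
      refine ⟨⟨by omega, ?_⟩, h3⟩
      calc d ≤ d ^ j := Nat.le_self_pow (by omega) d
        _ ≤ M := Nat.le_of_dvd (by omega) h3
        _ ≤ n := hMn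
  rw [← Finset.sum_filter, hset,
    ← ArithmeticFunction.coe_mul_zeta_apply (f := (μ : ArithmeticFunction ℤ)) (x := r),
    ArithmeticFunction.moebius_mul_coe_zeta, ArithmeticFunction.one_apply]
  simp only [hone]

open ArithmeticFunction ArithmeticFunction.Moebius Finset in
lemma normInf_count_eq {j : ℕ} (hj : 1 ≤ j) (n : ℕ) :
    ((((Finset.Icc 1 n)).filter (fun M => normInf M < j)).card : ℤ)
      = ∑ d ∈ Finset.Icc 1 n, (μ d) * ((n / d ^ j : ℕ) : ℤ) := by
  rw [Finset.card_filter]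
  push_cast
  have h1 : ∀ M ∈ Finset.Icc 1 n, (if normInf M < j then (1:ℤ) else 0)
      = ∑ d ∈ Finset.Icc 1 n, if d ^ j ∣ M then (μ d : ℤ) else 0 := fun M hM => by
    rw [Finset.mem_Icc] at hM
    exact normInf_ite_eq_sum hj hM.1 hM.2
  rw [Finset.sum_congr rfl h1, Finset.sum_comm]
  refine Finset.sum_congr rfl fun d hd => ?_
  rw [← Finset.sum_filter, Finset.sum_const]
  have hcard : ((Finset.Icc 1 n).filter (fun M => d ^ j ∣ M)).card = n / d ^ j := by
    rw [show (Finset.Icc 1 n) = Finset.Ioc 0 n from Finset.Icc_succ_left_eq_Ioc 0 n]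
    exact Nat.Ioc_filter_dvd_card_eq_div n (d ^ j)
  rw [hcard, nsmul_eq_mul, mul_comm]
  push_cast
  ring

open ArithmeticFunction ArithmeticFunction.Moebius in
lemma normInf_tendsto {j : ℕ} (hj : 2 ≤ j) :
    Filter.Tendsto (fun n : ℕ =>
        (((Finset.Icc 1 n).filter (fun M => normInf M < j)).card : ℝ) / n)
      Filter.atTop (nhds (∑' d : ℕ, (μ d : ℝ) / (d : ℝ) ^ j)) := by
  have hsum : Summable (fun d : ℕ => 1 / (d : ℝ) ^ j) :=
    Real.summable_one_div_nat_pow.mpr (by omega)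
  set f : ℕ → ℕ → ℝ := fun n d => (μ d : ℝ) * ((n / d ^ j : ℕ) : ℝ) / n with hfdef
  have key : Filter.Tendsto (fun n => ∑' d, f n d) Filter.atTop
      (nhds (∑' d : ℕ, (μ d : ℝ) / (d : ℝ) ^ j)) := by
    refine tendsto_tsum_of_dominated_convergence hsum ?_ ?_
    · intro d
      rcases Nat.eq_zero_or_pos d with rfl | hd
      · simpa [hfdef] using tendsto_const_nhds
      · set m := d ^ j with hm
        have hm1 : 1 ≤ m := Nat.one_le_iff_ne_zero.mpr (pow_ne_zero j (by omega))
        have hm0 : (0:ℝ) < m := by exact_mod_cast hm1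
        have hmain : Filter.Tendsto (fun n : ℕ => ((n / m : ℕ) : ℝ) / n)
            Filter.atTop (nhds (1 / m)) := by
          rw [← tendsto_sub_nhds_zero_iff]
          refine squeeze_zero_norm' ?_ tendsto_one_div_atTop_nhds_zero_nat
          filter_upwards [Filter.eventually_ge_atTop 1] with n hn
          have hn0 : (0:ℝ) < n := by exact_mod_cast hn
          have hcast : ((n % m : ℕ) : ℝ) + (m : ℝ) * ((n / m : ℕ) : ℝ) = n := by
            exact_mod_cast congrArg (Nat.cast : ℕ → ℝ) (Nat.mod_add_div n m)
          have heq2 : ((n / m : ℕ) : ℝ) / n - 1 / m = -(((n % m : ℕ) : ℝ) / (n * m)) := by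
            field_simp
            linarith [hcast]
          rw [heq2, norm_neg, Real.norm_eq_abs,
            abs_of_nonneg (by positivity)]
          have hmod : ((n % m : ℕ) : ℝ) ≤ m := by
            exact_mod_cast (Nat.mod_lt n hm1).le
          calc ((n % m : ℕ) : ℝ) / (n * m) ≤ (m : ℝ) / (n * m) := by gcongr
            _ = 1 / n := by field_simp
        have : (fun n => f n d) = fun n : ℕ => (μ d : ℝ) * (((n / m : ℕ) : ℝ) / n) := by
          funext n; simp only [hfdef, hm, mul_div_assoc]
        have h7 : (μ d : ℝ) / (d : ℝ) ^ j = (μ d : ℝ) * (1 / (m : ℝ)) := by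
          rw [hm]; push_cast; ring
        rw [this, h7]
        exact hmain.const_mul _
    · filter_upwards [Filter.eventually_ge_atTop 1] with n hn d
      rcases Nat.eq_zero_or_pos d with rfl | hd
      · simp [hfdef, (by omega : j ≠ 0)]
      · have hn0 : (0:ℝ) < n := by exact_mod_cast hn
        have hd0 : (0:ℝ) < (d : ℝ) ^ j := by positivity
        have habs : |(μ d : ℝ)| ≤ 1 := by
          exact_mod_cast (abs_moebius_le_one (n := d))
        have h5 : ((n / d ^ j : ℕ) : ℝ) / n ≤ ((n : ℝ) / (d : ℝ) ^ j) / n := by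
          gcongr
          exact_mod_cast Nat.cast_div_le
        have h6 : ((n : ℝ) / (d : ℝ) ^ j) / n = 1 / (d : ℝ) ^ j := by
          field_simp
        calc ‖f n d‖ = |(μ d : ℝ)| * |((n / d ^ j : ℕ) : ℝ) / n| := by
              rw [hfdef]
              simp only [mul_div_assoc]
              rw [Real.norm_eq_abs, abs_mul]
          _ = |(μ d : ℝ)| * (((n / d ^ j : ℕ) : ℝ) / n) := by
              congr 1
              exact abs_of_nonneg (by positivity)
          _ ≤ 1 * (1 / (d : ℝ) ^ j) :=
              mul_le_mul habs (h6 ▸ h5) (by positivity) zero_le_one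
          _ = 1 / (d : ℝ) ^ j := one_mul _
  refine key.congr' ?_
  filter_upwards [Filter.eventually_ge_atTop 1] with n hn
  have hZ : ((((Finset.Icc 1 n)).filter (fun M => normInf M < j)).card : ℝ)
      = ∑ d ∈ Finset.Icc 1 n, (μ d : ℝ) * ((n / d ^ j : ℕ) : ℝ) := by
    have h := normInf_count_eq (by omega : 1 ≤ j) n
    rw [show ((((Finset.Icc 1 n)).filter (fun M => normInf M < j)).card : ℝ)
      = (((((Finset.Icc 1 n)).filter (fun M => normInf M < j)).card : ℤ) : ℝ) by norm_cast, h]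
    simp only [Int.cast_sum, Int.cast_mul, ArithmeticFunction.intCoe_apply, Int.cast_natCast]
  have htsum : ∑' d, f n d = ∑ d ∈ Finset.Icc 1 n, f n d := by
    refine tsum_eq_sum fun d hd => ?_
    rcases Nat.eq_zero_or_pos d with rfl | hd0
    · simp [hfdef]
    · have hdn : n < d := by
        rw [Finset.mem_Icc] at hd; omega
      have : n / d ^ j = 0 :=
        Nat.div_eq_of_lt (lt_of_lt_of_le hdn (Nat.le_self_pow (by omega) d))
      simp [hfdef, this]
  rw [htsum]
  simp only [hfdef]
  rw [← Finset.sum_div, ← hZ]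

open ArithmeticFunction ArithmeticFunction.Moebius in
theorem stmt_14 (k : ℕ) (hk : 2 ≤ k) :
    ∃ L : ℝ,
      Tendsto (fun n : ℕ =>
          (((Finset.Icc 1 n).filter (fun M => normInf M = k)).card : ℝ) / n)
        atTop (nhds L) ∧
      (L : ℂ) = (riemannZeta ((k : ℂ) + 1))⁻¹ - (riemannZeta (k : ℂ))⁻¹ := by
  have h1 := normInf_tendsto (j := k + 1) (by omega)
  have h2 := normInf_tendsto (j := k) hk
  refine ⟨(∑' d : ℕ, (μ d : ℝ) / (d : ℝ) ^ (k + 1)) - ∑' d : ℕ, (μ d : ℝ) / (d : ℝ) ^ k,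
    ?_, ?_⟩
  · have hcard : ∀ n : ℕ, (((Finset.Icc 1 n).filter (fun M => normInf M = k)).card : ℝ)
        = (((Finset.Icc 1 n).filter (fun M => normInf M < k + 1)).card : ℝ)
          - (((Finset.Icc 1 n).filter (fun M => normInf M < k)).card : ℝ) := by
      intro n
      have hsplit : (Finset.Icc 1 n).filter (fun M => normInf M < k + 1)
          = ((Finset.Icc 1 n).filter (fun M => normInf M = k))
            ∪ ((Finset.Icc 1 n).filter (fun M => normInf M < k)) := by
        rw [← Finset.filter_or]
        exact Finset.filter_congr fun M _ => by omega
      have hdisj : Disjoint ((Finset.Icc 1 n).filter (fun M => normInf M = k))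
          ((Finset.Icc 1 n).filter (fun M => normInf M < k)) := by
        refine Finset.disjoint_left.mpr fun a ha hb => ?_
        simp only [Finset.mem_filter] at ha hb
        omega
      rw [hsplit, Finset.card_union_of_disjoint hdisj]
      push_cast
      ring
    refine (h1.sub h2).congr fun n => ?_
    rw [hcard n, sub_div]
  · have hzeta : ∀ j : ℕ, 2 ≤ j →
        (((∑' d : ℕ, (μ d : ℝ) / (d : ℝ) ^ j) : ℝ) : ℂ) = (riemannZeta (j : ℂ))⁻¹ := by
      intro j hj
      have hre : 1 < ((j : ℕ) : ℂ).re := by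
        rw [Complex.natCast_re]
        exact_mod_cast (by omega : 1 < j)
      have hL : riemannZeta (j : ℂ) * LSeries (fun n => ((μ n : ℤ) : ℂ)) (j : ℂ) = 1 := by
        rw [← LSeries_one_eq_riemannZeta hre]
        exact LSeries_one_mul_Lseries_moebius hre
      rw [inv_eq_of_mul_eq_one_right hL, LSeries, Complex.ofReal_tsum]
      refine tsum_congr fun d => ?_
      rcases eq_or_ne d 0 with rfl | hd
      · simp [LSeries.term_zero]
      · rw [LSeries.term_of_ne_zero hd, Complex.cpow_natCast]
        push_cast
        rfl
    rw [Complex.ofReal_sub, hzeta (k + 1) (by omega), hzeta k hk]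
    norm_cast
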